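/- Let A be a random adjacency tensor of size n×n×L with L ≤ n and n ≥ 2: the entries {A(i₁,i₂,i₃) : 1 ≤ i₁ ≤ i₂ ≤ n, 1 ≤ i₃ ≤ L} are independent Bernoulli random variables, A(i₂,i₁,i₃) = A(i₁,i₂,i₃), and p_max = max E A(i₁,i₂,i₃) > 0. Then: (i) with probability at least 1 − n^{-2}, max_{i₂ ∈ [n], i₃ ∈ [L]} #{ i₁ ∈ [n] : A(i₁,i₂,i₃) = 1 } < 13 (n p_max + log n); and (ii) with probability at least 1 − n^{-2}, max_{i₃ ∈ [L]} #{ (i₁,i₂) ∈ [n]² : A(i₁,i₂,i₃) = 1 } < 13 (n² p_max + log n). (Bounds on the aspect ratios ν_{2,3} and ν₃ of the adjacency tensor.) -/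

import Mathlib

open MeasureTheory ProbabilityTheory

lemma my_precomp {Ω : Type*} [MeasurableSpace Ω] {μ : Measure Ω} {ι κ : Type*} [Nonempty κ]
    {f : ι → Ω → ℝ}
    (h : iIndepFun f μ) {g : κ → ι} (hg : Function.Injective g) :
    iIndepFun (fun k => f (g k)) μ := by
  classical
  rw [iIndepFun_iff_measure_inter_preimage_eq_mul] at h ⊢
  intro S sets hsets
  have hinv : ∀ x, Function.invFun g (g x) = x := Function.leftInverse_invFun hg
  have key := h (S.image g) (sets := fun j => sets (Function.invFun g j)) ?_
  · calc μ (⋂ i ∈ S, f (g i) ⁻¹' sets i)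
        = μ (⋂ j ∈ S.image g, f j ⁻¹' sets (Function.invFun g j)) := by
          rw [Finset.set_biInter_finset_image]
          simp only [hinv]
      _ = ∏ j ∈ S.image g, μ (f j ⁻¹' sets (Function.invFun g j)) := key
      _ = ∏ i ∈ S, μ (f (g i) ⁻¹' sets i) := by
          rw [Finset.prod_image (fun a _ b _ hab => hg hab)]
          simp only [hinv]
  · intro j hj
    obtain ⟨i, hi, rfl⟩ := Finset.mem_image.1 hj
    simp only [hinv]; exact hsets i hi

lemma my_sum_eq_ncard {κ : Type*} [Fintype κ] (f : κ → ℝ) (hf : ∀ i, f i = 0 ∨ f i = 1) :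
    ({i | f i = 1}.ncard : ℝ) = ∑ i, f i := by
  classical
  have h1 : {i | f i = 1}.ncard = (Finset.univ.filter fun i => f i = 1).card := by
    rw [← Set.ncard_coe_finset]; congr 1; ext i; simp
  have h2 : ∑ i, f i = ∑ i ∈ Finset.univ.filter (fun i => f i = 1), f i :=
    (Finset.sum_filter_of_ne (fun i _ h => (hf i).resolve_left h)).symm
  rw [h1, h2, Finset.sum_congr rfl (fun x hx => (Finset.mem_filter.1 hx).2)]
  simp

lemma my_chernoff {Ω : Type*} [MeasureSpace Ω] [IsProbabilityMeasure (ℙ : Measure Ω)]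
    {κ : Type*} [Fintype κ] (X : κ → Ω → ℝ)
    (hmeas : ∀ i, Measurable (X i)) (hval : ∀ i ω, X i ω = 0 ∨ X i ω = 1)
    (hindep : iIndepFun X ℙ)
    (p : ℝ) (hmean : ∀ i, ∫ ω, X i ω ≤ p) (a : ℝ) :
    (ℙ {ω | a ≤ ∑ i, X i ω}).toReal
      ≤ Real.exp (-a + (Fintype.card κ) * ((Real.exp 1 - 1) * p)) := by
  classical
  have hX01 : ∀ i ω, 0 ≤ X i ω ∧ X i ω ≤ 1 := by
    intro i ω; rcases hval i ω with h | h <;> rw [h] <;> norm_num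
  have hexpX : ∀ i ω, Real.exp (1 * X i ω) = 1 + (Real.exp 1 - 1) * X i ω := by
    intro i ω; rcases hval i ω with h | h <;> rw [h] <;> simp
  have hSmeas : Measurable (fun ω => ∑ i, X i ω) :=
    Finset.measurable_sum _ (fun i _ => hmeas i)
  have hfn : (fun ω => ∑ i, X i ω) = ∑ i, X i := by
    funext ω; simp
  have hint : Integrable (fun ω => Real.exp (1 * (∑ i, X i ω))) ℙ := by
    refine Integrable.mono' (integrable_const (Real.exp (Fintype.card κ)))
      ((hSmeas.const_mul 1).exp.aestronglyMeasurable) (ae_of_all _ fun ω => ?_)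
    rw [Real.norm_eq_abs, abs_of_pos (Real.exp_pos _), Real.exp_le_exp, one_mul]
    calc ∑ i, X i ω ≤ ∑ _i : κ, (1 : ℝ) := Finset.sum_le_sum (fun i _ => (hX01 i ω).2)
      _ = Fintype.card κ := by simp
  have hcher := measure_ge_le_exp_mul_mgf (μ := ℙ) (X := fun ω => ∑ i, X i ω) a zero_le_one hint
  refine hcher.trans ?_
  have hmgf : mgf (fun ω => ∑ i, X i ω) ℙ 1 = ∏ i, mgf (X i) ℙ 1 := by
    rw [hfn]
    exact hindep.mgf_sum hmeas Finset.univ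
  have hXint : ∀ i, Integrable (X i) ℙ := by
    intro i
    refine Integrable.mono' (integrable_const 1) (hmeas i).aestronglyMeasurable
      (ae_of_all _ fun ω => ?_)
    rw [Real.norm_eq_abs, abs_of_nonneg (hX01 i ω).1]; exact (hX01 i ω).2
  have hmgf_le : ∀ i, mgf (X i) ℙ 1 ≤ Real.exp ((Real.exp 1 - 1) * p) := by
    intro i
    have h1 : mgf (X i) ℙ 1 = ∫ ω, (1 + (Real.exp 1 - 1) * X i ω) ∂ℙ := by
      unfold mgf; congr 1; funext ω; exact hexpX i ω
    rw [h1, integral_add (integrable_const 1) ((hXint i).const_mul _),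
      integral_const, integral_const_mul]
    simp only [smul_eq_mul, measure_univ, ENNReal.toReal_one, probReal_univ, one_mul, mul_one]
    have h2 : (Real.exp 1 - 1) * ∫ ω, X i ω ≤ (Real.exp 1 - 1) * p :=
      mul_le_mul_of_nonneg_left (hmean i) (by linarith [Real.add_one_le_exp 1])
    calc 1 + (Real.exp 1 - 1) * ∫ ω, X i ω ≤ 1 + (Real.exp 1 - 1) * p := by linarith
      _ ≤ Real.exp ((Real.exp 1 - 1) * p) := by
          linarith [Real.add_one_le_exp ((Real.exp 1 - 1) * p)]
  calc Real.exp (-1 * a) * mgf (fun ω => ∑ i, X i ω) ℙ 1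
      ≤ Real.exp (-1 * a) * ∏ _i : κ, Real.exp ((Real.exp 1 - 1) * p) := by
        rw [hmgf]
        exact mul_le_mul_of_nonneg_left
          (Finset.prod_le_prod (fun i _ => mgf_nonneg) (fun i _ => hmgf_le i))
          (Real.exp_pos _).le
    _ = Real.exp (-a + (Fintype.card κ) * ((Real.exp 1 - 1) * p)) := by
        rw [Finset.prod_const, ← Real.exp_nat_mul, ← Real.exp_add, Finset.card_univ]
        ring_nf

lemma my_sym_sum_le {n : ℕ} (f : Fin n × Fin n → ℝ) (hf0 : ∀ p, 0 ≤ f p)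
    (hsymf : ∀ a b, f (a, b) = f (b, a)) :
    ∑ p, f p ≤ 2 * ∑ p : {p : Fin n × Fin n // p.1 ≤ p.2}, f p.1 := by
  classical
  have hsub : ∑ p : {p : Fin n × Fin n // p.1 ≤ p.2}, f p.1
      = ∑ p ∈ Finset.univ.filter (fun p : Fin n × Fin n => p.1 ≤ p.2), f p :=
    (Finset.sum_subtype _ (by simp) f).symm
  rw [hsub, ← Finset.sum_filter_add_sum_filter_not Finset.univ
    (fun p : Fin n × Fin n => p.1 ≤ p.2) f]
  have hswap : ∑ p ∈ Finset.univ.filter (fun p : Fin n × Fin n => ¬ p.1 ≤ p.2), f p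
      = ∑ p ∈ Finset.univ.filter (fun p : Fin n × Fin n => p.1 < p.2), f p := by
    refine Finset.sum_nbij' (i := Prod.swap) (j := Prod.swap) ?_ ?_ ?_ ?_ ?_
    · intro p hp; simp only [Finset.mem_filter, Finset.mem_univ, true_and, not_le] at hp ⊢
      exact hp
    · intro p hp; simp only [Finset.mem_filter, Finset.mem_univ, true_and, not_le] at hp ⊢
      exact hp
    · intro p _; simp
    · intro p _; simp
    · intro p _; rw [← hsymf]; rfl
  have hle : ∑ p ∈ Finset.univ.filter (fun p : Fin n × Fin n => p.1 < p.2), f p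
      ≤ ∑ p ∈ Finset.univ.filter (fun p : Fin n × Fin n => p.1 ≤ p.2), f p := by
    refine Finset.sum_le_sum_of_subset_of_nonneg ?_ (fun p _ _ => hf0 p)
    intro p hp
    simp only [Finset.mem_filter, Finset.mem_univ, true_and] at hp ⊢
    exact hp.le
  linarith [hswap, hle]


lemma my_exp_eq (n : ℕ) (hn : 0 < n) : ((n : ℝ) ^ 2) = Real.exp (2 * Real.log n) := by
  have hn0 : (0 : ℝ) < n := by positivity
  rw [← Real.exp_log (show (0:ℝ) < (n:ℝ)^2 by positivity), Real.log_pow]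
  push_cast; ring_nf

lemma my_exp_bound (n : ℕ) (hn : 2 ≤ n) (E : ℝ) (hE : E ≤ -4 * Real.log n) :
    ((n : ℝ) ^ 2) * Real.exp E ≤ 1 / (n : ℝ) ^ 2 := by
  have hn0 : (0 : ℝ) < n := by positivity
  have hlog0 : 0 ≤ Real.log n := Real.log_nonneg (by exact_mod_cast hn.trans' (by norm_num))
  have h1 : ((n : ℝ) ^ 2) * Real.exp E ≤ (n : ℝ) ^ 2 * Real.exp (-4 * Real.log n) := by
    have := Real.exp_le_exp.2 hE
    nlinarith [Real.exp_pos E, sq_nonneg ((n:ℝ))]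
  refine h1.trans ?_
  rw [my_exp_eq n (by omega), ← Real.exp_add]
  have h3 : Real.exp (2 * Real.log n + -4 * Real.log n) ≤ Real.exp (-(2 * Real.log n)) :=
    Real.exp_le_exp.2 (by linarith)
  refine h3.trans_eq ?_
  rw [Real.exp_neg, ← my_exp_eq n (by omega), one_div]

lemma my_union_bound {Ω : Type*} [MeasureSpace Ω] [IsProbabilityMeasure (ℙ : Measure Ω)]
    {ι : Type*} [Fintype ι] (B : ι → Set Ω) (hB : ∀ i, MeasurableSet (B i))
    (c δ : ℝ) (hc0 : 0 ≤ c) (hc : ∀ i, (ℙ (B i)).toReal ≤ c)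
    (hcδ : (Fintype.card ι : ℝ) * c ≤ δ) :
    ENNReal.ofReal (1 - δ) ≤ ℙ (⋃ i, B i)ᶜ := by
  have hδ0 : 0 ≤ δ := le_trans (by positivity) hcδ
  have h1 : ℙ (⋃ i, B i) ≤ ENNReal.ofReal δ := by
    calc ℙ (⋃ i, B i) ≤ ∑' i, ℙ (B i) := measure_iUnion_le B
      _ = ∑ i, ℙ (B i) := tsum_fintype _
      _ ≤ ∑ _i : ι, ENNReal.ofReal c := Finset.sum_le_sum (fun i _ => by
            rw [← ENNReal.ofReal_toReal (measure_ne_top ℙ (B i))]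
            exact ENNReal.ofReal_le_ofReal (hc i))
      _ = (Fintype.card ι : ENNReal) * ENNReal.ofReal c := by
            rw [Finset.sum_const, Finset.card_univ, nsmul_eq_mul]
      _ = ENNReal.ofReal ((Fintype.card ι : ℝ) * c) := by
            rw [ENNReal.ofReal_mul (by positivity), ENNReal.ofReal_natCast]
      _ ≤ ENNReal.ofReal δ := ENNReal.ofReal_le_ofReal hcδ
  rw [prob_compl_eq_one_sub (MeasurableSet.iUnion hB)]
  calc ENNReal.ofReal (1 - δ) = 1 - ENNReal.ofReal δ := by
        rw [ENNReal.ofReal_sub _ hδ0, ENNReal.ofReal_one]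
    _ ≤ 1 - ℙ (⋃ i, B i) := tsub_le_tsub_left h1 1

/-- **Aspect-ratio (fiber and slice sparsity) bounds for the adjacency tensor**
(Chernoff bounds used in the proof of Theorem 5 of the paper): with probability at
least `1 − n⁻²`, every mode-1 fiber has fewer than `13(n p_max + log n)` nonzero
entries, and with probability at least `1 − n⁻²`, every frontal slice has fewer than
`13(n² p_max + log n)` nonzero entries. -/
theorem aspect_ratio_bounds
    {Ω : Type*} [MeasureSpace Ω] [IsProbabilityMeasure (ℙ : Measure Ω)]
    (n L : ℕ) (hLn : L ≤ n) (hn : 2 ≤ n)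
    (A : Fin n → Fin n → Fin L → Ω → ℝ)
    (hmeas : ∀ i₁ i₂ i₃, Measurable (A i₁ i₂ i₃))
    (hval : ∀ i₁ i₂ i₃ ω, A i₁ i₂ i₃ ω = 0 ∨ A i₁ i₂ i₃ ω = 1)
    (hsym : ∀ i₁ i₂ i₃, A i₂ i₁ i₃ = A i₁ i₂ i₃)
    (hindep : iIndepFun
      (fun q : {q : Fin n × Fin n × Fin L // q.1 ≤ q.2.1} =>
        A q.1.1 q.1.2.1 q.1.2.2) ℙ)
    (pmax : ℝ) (hpmax_pos : 0 < pmax)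
    (hpmax : IsGreatest {x | ∃ i₁ i₂ i₃, x = ∫ ω, A i₁ i₂ i₃ ω} pmax) :
    ENNReal.ofReal (1 - 1 / (n : ℝ) ^ 2) ≤
      ℙ {ω | ∀ (i₂ : Fin n) (i₃ : Fin L),
          (({i₁ : Fin n | A i₁ i₂ i₃ ω = 1}.ncard : ℝ)
            < 13 * (n * pmax + Real.log n))} ∧
    ENNReal.ofReal (1 - 1 / (n : ℝ) ^ 2) ≤
      ℙ {ω | ∀ i₃ : Fin L,
          (({p : Fin n × Fin n | A p.1 p.2 i₃ ω = 1}.ncard : ℝ)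
            < 13 * ((n : ℝ) ^ 2 * pmax + Real.log n))} := by
  classical
  have hpm0 : 0 ≤ pmax := hpmax_pos.le
  have hlog0 : 0 ≤ Real.log n :=
    Real.log_nonneg (by exact_mod_cast hn.trans' (by norm_num))
  have he13 : Real.exp 1 - 1 ≤ (13 : ℝ) := by nlinarith [Real.exp_one_lt_d9]
  have he0 : 0 ≤ Real.exp 1 - 1 := by nlinarith [Real.add_one_le_exp (1:ℝ)]
  have hmean : ∀ i₁ i₂ i₃, ∫ ω, A i₁ i₂ i₃ ω ≤ pmax :=
    fun i₁ i₂ i₃ => hpmax.2 ⟨i₁, i₂, i₃, rfl⟩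
  haveI : Nonempty (Fin n) := ⟨⟨0, by omega⟩⟩
  constructor
  -- ====================== Part 1 : fibers ======================
  · set a₁ : ℝ := 13 * (n * pmax + Real.log n) with ha₁
    set c₁ : ℝ := Real.exp (-a₁ + (n : ℝ) * ((Real.exp 1 - 1) * pmax)) with hc₁
    set B : Fin n × Fin L → Set Ω :=
      fun q => {ω | a₁ ≤ ∑ i₁, A i₁ q.1 q.2 ω} with hB
    have hBmeas : ∀ q, MeasurableSet (B q) := fun q =>
      measurableSet_le measurable_const (Finset.measurable_sum _ fun i _ => hmeas i q.1 q.2)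
    -- independence of each fiber
    have hfibindep : ∀ (i₂ : Fin n) (i₃ : Fin L),
        iIndepFun (fun i₁ : Fin n => A i₁ i₂ i₃) ℙ := by
      intro i₂ i₃
      set g : Fin n → {q : Fin n × Fin n × Fin L // q.1 ≤ q.2.1} := fun i₁ =>
        if h : i₁ ≤ i₂ then ⟨(i₁, i₂, i₃), h⟩ else ⟨(i₂, i₁, i₃), le_of_not_ge h⟩ with hg
      have hginj : Function.Injective g := by
        intro a b hab
        by_cases h1 : a ≤ i₂ <;> by_cases h2 : b ≤ i₂ <;>
          simp only [hg, dif_pos, dif_neg, h1, h2, dite_true, dite_false,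
            Subtype.mk.injEq, Prod.mk.injEq] at hab
        · exact hab.1
        · exact absurd (le_of_eq hab.2.1.symm) h2
        · exact absurd (le_of_eq hab.2.1) h1
        · exact hab.2.1
      have h0 := my_precomp hindep hginj
      have hfe : (fun k : Fin n =>
          (fun q : {q : Fin n × Fin n × Fin L // q.1 ≤ q.2.1} =>
            A q.1.1 q.1.2.1 q.1.2.2) (g k)) = fun i₁ => A i₁ i₂ i₃ := by
        funext i₁
        by_cases h : i₁ ≤ i₂
        · simp only [hg, dif_pos h]
        · simp only [hg, dif_neg h]
          exact hsym i₁ i₂ i₃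
      rwa [hfe] at h0
    have hBbound : ∀ q : Fin n × Fin L, (ℙ (B q)).toReal ≤ c₁ := by
      intro q
      have := my_chernoff (fun i₁ => A i₁ q.1 q.2) (fun i₁ => hmeas i₁ q.1 q.2)
        (fun i₁ ω => hval i₁ q.1 q.2 ω) (hfibindep q.1 q.2) pmax
        (fun i₁ => hmean i₁ q.1 q.2) a₁
      simpa [Fintype.card_fin] using this
    have hcard : ((Fintype.card (Fin n × Fin L) : ℝ)) * c₁ ≤ 1 / (n : ℝ) ^ 2 := by
      have hc : (Fintype.card (Fin n × Fin L) : ℝ) ≤ (n : ℝ) ^ 2 := by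
        simp only [Fintype.card_prod, Fintype.card_fin]
        push_cast
        have h1 : (L : ℝ) ≤ (n : ℝ) := by exact_mod_cast hLn
        have h2 : (0 : ℝ) ≤ (n : ℝ) := by positivity
        nlinarith [h1, h2]
      have hE : -a₁ + (n : ℝ) * ((Real.exp 1 - 1) * pmax) ≤ -4 * Real.log n := by
        have hnp : 0 ≤ (n : ℝ) * pmax := by positivity
        nlinarith [mul_le_mul_of_nonneg_right he13 hnp]
      calc ((Fintype.card (Fin n × Fin L) : ℝ)) * c₁ ≤ (n : ℝ) ^ 2 * c₁ :=
            mul_le_mul_of_nonneg_right hc (Real.exp_pos _).le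
        _ ≤ 1 / (n : ℝ) ^ 2 := my_exp_bound n hn _ hE
    have hub := my_union_bound B hBmeas c₁ (1 / (n : ℝ) ^ 2) (Real.exp_pos _).le hBbound hcard
    have hset : {ω | ∀ (i₂ : Fin n) (i₃ : Fin L),
        (({i₁ : Fin n | A i₁ i₂ i₃ ω = 1}.ncard : ℝ) < 13 * (n * pmax + Real.log n))}
        = (⋃ q, B q)ᶜ := by
      ext ω
      simp only [Set.mem_setOf_eq, Set.mem_compl_iff, Set.mem_iUnion, not_exists, hB, not_le]
      constructor
      · intro h q
        exact (my_sum_eq_ncard (fun i₁ => A i₁ q.1 q.2 ω)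
          (fun i₁ => hval i₁ q.1 q.2 ω)).symm.trans_lt (h q.1 q.2)
      · intro h i₂ i₃
        exact (my_sum_eq_ncard (fun i₁ => A i₁ i₂ i₃ ω)
          (fun i₁ => hval i₁ i₂ i₃ ω)).trans_lt (h (i₂, i₃))
    rw [hset]
    exact hub
  -- ====================== Part 2 : slices ======================
  · set a₂ : ℝ := (13 / 2) * ((n : ℝ) ^ 2 * pmax + Real.log n) with ha₂
    set c₂ : ℝ := Real.exp (-a₂ + (n : ℝ) ^ 2 * ((Real.exp 1 - 1) * pmax)) with hc₂
    haveI : Nonempty {p : Fin n × Fin n // p.1 ≤ p.2} :=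
      ⟨⟨(⟨0, by omega⟩, ⟨0, by omega⟩), le_rfl⟩⟩
    set B : Fin L → Set Ω :=
      fun i₃ => {ω | a₂ ≤ ∑ p : {p : Fin n × Fin n // p.1 ≤ p.2}, A p.1.1 p.1.2 i₃ ω} with hB
    have hBmeas : ∀ i₃, MeasurableSet (B i₃) := fun i₃ =>
      measurableSet_le measurable_const (Finset.measurable_sum _ fun p _ => hmeas p.1.1 p.1.2 i₃)
    have hslindep : ∀ i₃ : Fin L, iIndepFun
        (fun p : {p : Fin n × Fin n // p.1 ≤ p.2} => A p.1.1 p.1.2 i₃) ℙ := by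
      intro i₃
      set g : {p : Fin n × Fin n // p.1 ≤ p.2} → {q : Fin n × Fin n × Fin L // q.1 ≤ q.2.1} :=
        fun p => ⟨(p.1.1, p.1.2, i₃), p.2⟩ with hg
      have hginj : Function.Injective g := by
        intro a b hab
        simp only [hg, Subtype.mk.injEq, Prod.mk.injEq] at hab
        exact Subtype.ext (Prod.ext hab.1 hab.2.1)
      exact my_precomp hindep hginj
    have hBbound : ∀ i₃ : Fin L, (ℙ (B i₃)).toReal ≤ c₂ := by
      intro i₃
      have hch := my_chernoff (fun p : {p : Fin n × Fin n // p.1 ≤ p.2} => A p.1.1 p.1.2 i₃)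
        (fun p => hmeas p.1.1 p.1.2 i₃) (fun p ω => hval p.1.1 p.1.2 i₃ ω)
        (hslindep i₃) pmax (fun p => hmean p.1.1 p.1.2 i₃) a₂
      refine hch.trans (Real.exp_le_exp.2 ?_)
      have hcard2 : (Fintype.card {p : Fin n × Fin n // p.1 ≤ p.2} : ℝ) ≤ (n : ℝ) ^ 2 := by
        have := Fintype.card_subtype_le (fun p : Fin n × Fin n => p.1 ≤ p.2)
        have h2 : (Fintype.card {p : Fin n × Fin n // p.1 ≤ p.2} : ℝ)
            ≤ (Fintype.card (Fin n × Fin n) : ℝ) := by exact_mod_cast this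
        refine h2.trans ?_
        simp only [Fintype.card_prod, Fintype.card_fin]
        push_cast; nlinarith [show (0:ℝ) ≤ (n:ℝ) by positivity]
      have hp0 : 0 ≤ (Real.exp 1 - 1) * pmax := mul_nonneg he0 hpm0
      nlinarith [mul_le_mul_of_nonneg_right hcard2 hp0]
    have hcard : ((Fintype.card (Fin L) : ℝ)) * c₂ ≤ 1 / (n : ℝ) ^ 2 := by
      have hc : (Fintype.card (Fin L) : ℝ) ≤ (n : ℝ) ^ 2 := by
        simp only [Fintype.card_fin]
        have h1 : (L : ℝ) ≤ (n : ℝ) := by exact_mod_cast hLn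
        nlinarith [show (0:ℝ) ≤ (n:ℝ) by positivity, (show (1:ℝ) ≤ (n:ℝ) by exact_mod_cast hn.trans' (by norm_num))]
      have hE : -a₂ + (n : ℝ) ^ 2 * ((Real.exp 1 - 1) * pmax) ≤ -4 * Real.log n := by
        have hnp : 0 ≤ (n : ℝ) ^ 2 * pmax := by positivity
        have he65 : Real.exp 1 - 1 ≤ (13 / 2 : ℝ) := by nlinarith [Real.exp_one_lt_d9]
        nlinarith [mul_le_mul_of_nonneg_right he65 hnp]
      calc ((Fintype.card (Fin L) : ℝ)) * c₂ ≤ (n : ℝ) ^ 2 * c₂ :=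
            mul_le_mul_of_nonneg_right hc (Real.exp_pos _).le
        _ ≤ 1 / (n : ℝ) ^ 2 := my_exp_bound n hn _ hE
    have hub := my_union_bound B hBmeas c₂ (1 / (n : ℝ) ^ 2) (Real.exp_pos _).le hBbound hcard
    refine hub.trans (measure_mono ?_)
    intro ω hω
    simp only [Set.mem_compl_iff, Set.mem_iUnion, not_exists, hB, Set.mem_setOf_eq, not_le] at hω
    simp only [Set.mem_setOf_eq]
    intro i₃
    have hω3 := hω i₃
    have hsymsum := my_sym_sum_le (fun p : Fin n × Fin n => A p.1 p.2 i₃ ω)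
      (fun p => by
        show (0:ℝ) ≤ A p.1 p.2 i₃ ω
        rcases hval p.1 p.2 i₃ ω with h | h <;> rw [h] <;> norm_num)
      (fun a b => congrFun (hsym b a i₃) ω)
    calc (({p : Fin n × Fin n | A p.1 p.2 i₃ ω = 1}.ncard : ℝ))
        = ∑ p : Fin n × Fin n, A p.1 p.2 i₃ ω :=
          my_sum_eq_ncard (fun p : Fin n × Fin n => A p.1 p.2 i₃ ω)
            (fun p => hval p.1 p.2 i₃ ω)
      _
        ≤ 2 * ∑ p : {p : Fin n × Fin n // p.1 ≤ p.2}, A p.1.1 p.1.2 i₃ ω := hsymsum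
      _ < 13 * ((n : ℝ) ^ 2 * pmax + Real.log n) := by
          rw [ha₂] at hω3; linarith
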